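/- Let λ₁ > 0, λ₂ > 0, α > 0 and θ ∈ [-1, 1], and for z, y > 0 let f_{Z,Y}(z,y) = λ₁λ₂ z e^{-(λ₁+λ₂y)z}(1 + θ(1 - 2e^{-λ₁z})(1 - 2e^{-λ₂yz})). Then for every z > 0, ∫₀^α f_{Z,Y}(z,y) dy = λ₁[(1+θ)e^{-λ₁z}(1 - e^{-λ₂αz}) - θe^{-λ₁z}(1 - e^{-2λ₂αz}) - 2θe^{-2λ₁z}(1 - e^{-λ₂αz}) + 2θe^{-2λ₁z}(1 - e^{-2λ₂αz})]. -/

import Mathlib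

open MeasureTheory Real

lemma int_exp_aux (c b : ℝ) (hc : c ≠ 0) :
    ∫ y in (0:ℝ)..b, Real.exp (-(c*y)) = (1 - Real.exp (-(c*b)))/c := by
  have h : ∀ y : ℝ, HasDerivAt (fun y => -Real.exp (-(c*y))/c) (Real.exp (-(c*y))) y := by
    intro y
    have h1 : HasDerivAt (fun y : ℝ => -(c*y)) (-c) y := by
      simpa [Pi.neg_def] using ((hasDerivAt_id y).const_mul c).neg
    have h2 := (Real.hasDerivAt_exp (-(c*y))).comp y h1
    have h3 := h2.neg.div_const c
    refine h3.congr_deriv ?_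
    field_simp
  rw [intervalIntegral.integral_eq_sub_of_hasDerivAt (fun y _ => h y)
    (by apply Continuous.intervalIntegrable; continuity)]
  simp
  field_simp
  ring

theorem gwed_hidden_truncation_inner_integral
    (l₁ l₂ α θ : ℝ) (hl₁ : 0 < l₁) (hl₂ : 0 < l₂) (hα : 0 < α)
    (hθ : θ ∈ Set.Icc (-1 : ℝ) 1)
    (f : ℝ → ℝ → ℝ)
    (hf : ∀ z y : ℝ, 0 < z → 0 < y →
      f z y = l₁ * l₂ * z * Real.exp (-(l₁ + l₂ * y) * z)
        * (1 + θ * (1 - 2 * Real.exp (-l₁ * z)) * (1 - 2 * Real.exp (-l₂ * y * z)))) :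
    ∀ z : ℝ, 0 < z →
      (∫ y in (0 : ℝ)..α, f z y)
        = l₁ * ((1 + θ) * Real.exp (-l₁ * z) * (1 - Real.exp (-l₂ * α * z))
            - θ * Real.exp (-l₁ * z) * (1 - Real.exp (-2 * l₂ * α * z))
            - 2 * θ * Real.exp (-2 * l₁ * z) * (1 - Real.exp (-l₂ * α * z))
            + 2 * θ * Real.exp (-2 * l₁ * z) * (1 - Real.exp (-2 * l₂ * α * z))) := by
  intro z hz
  set c : ℝ := l₂ * z with hcdef
  have hc : 0 < c := mul_pos hl₂ hz
  set E : ℝ := Real.exp (-l₁ * z) with hE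
  set A : ℝ := l₁ * c * E * (1 + θ * (1 - 2*E)) with hA
  set B : ℝ := -2 * l₁ * c * E * θ * (1 - 2*E) with hB
  have key : (∫ y in (0:ℝ)..α, f z y)
      = ∫ y in (0:ℝ)..α, (A * Real.exp (-(c*y)) + B * Real.exp (-(2*c*y))) := by
    rw [intervalIntegral.integral_of_le hα.le, intervalIntegral.integral_of_le hα.le]
    apply setIntegral_congr_fun measurableSet_Ioc
    intro y hy
    have hy0 : 0 < y := hy.1
    rw [hf z y hz hy0]
    have e1 : Real.exp (-(l₁ + l₂ * y) * z) = E * Real.exp (-(c*y)) := by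
      rw [hE, hcdef, ← Real.exp_add]; ring_nf
    have e2 : Real.exp (-l₂ * y * z) = Real.exp (-(c*y)) := by
      rw [hcdef]; ring_nf
    have e3 : Real.exp (-(2*c*y)) = Real.exp (-(c*y)) * Real.exp (-(c*y)) := by
      rw [← Real.exp_add]; ring_nf
    rw [e1, e2]
    rw [hA, hB]
    beta_reduce
    rw [e3]
    ring
  rw [key]
  have i1 := int_exp_aux c α hc.ne'
  have i2 := int_exp_aux (2*c) α (by positivity)
  rw [intervalIntegral.integral_add
      ((Continuous.intervalIntegrable (by continuity) _ _))
      ((Continuous.intervalIntegrable (by continuity) _ _)),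
    intervalIntegral.integral_const_mul, intervalIntegral.integral_const_mul, i1, i2]
  have hEα : Real.exp (-(c*α)) = Real.exp (-l₂ * α * z) := by rw [hcdef]; ring_nf
  have hEα2 : Real.exp (-(2*c*α)) = Real.exp (-2 * l₂ * α * z) := by rw [hcdef]; ring_nf
  have hE2 : Real.exp (-2 * l₁ * z) = E * E := by rw [hE, ← Real.exp_add]; ring_nf
  rw [hEα, hEα2, hE2, hA, hB]
  field_simp
  ring
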